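/- Let U ⊆ ℂ be open and X, Y complex Hilbert spaces. The set R := {f ∈ Hol(U, L(X,Y)) : ‖f(z)‖ ≤ 1 for all z ∈ U} is compact in the locally uniform weak operator topology 𝒯_Λ. If both X and Y are separable, then (R, 𝒯_Λ) is metrisable. -/

import Mathlib

noncomputable section
open Filter Topology ContinuousLinearMap Set Metric
open scoped NNReal ENNReal

namespace Paper

/-- Holomorphy of a function defined on (the subtype of) a set `U ⊆ ℂ`:
it extends to a function `ℂ → E` differentiable on `U`. -/
def HolFn (U : Set ℂ) {E : Type*} [NormedAddCommGroup E] [NormedSpace ℂ E]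
    (f : ↥U → E) : Prop :=
  ∃ g : ℂ → E, DifferentiableOn ℂ g U ∧ ∀ z : ↥U, f z = g (z : ℂ)

/-- The topology of locally uniform (compact) convergence on functions `↥U → E`. -/
def kc (U : Set ℂ) (E : Type*) [UniformSpace E] : TopologicalSpace (↥U → E) :=
  (UniformOnFun.uniformSpace ↥U E {K : Set ↥U | IsCompact K}).toTopologicalSpace

/-- The locally uniform weak operator topology `𝒯_Λ` on operator-valued functions on `U`:
the initial topology w.r.t. `f ↦ (z ↦ ⟨f(z)φ,ψ⟩) ∈ Hol(U,ℂ)` (compact convergence). -/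
def luwot (U : Set ℂ) (X Y : Type*) [NormedAddCommGroup X] [InnerProductSpace ℂ X]
    [NormedAddCommGroup Y] [InnerProductSpace ℂ Y] :
    TopologicalSpace (↥U → (X →L[ℂ] Y)) :=
  ⨅ (p : X × Y),
    TopologicalSpace.induced (fun f => fun z : ↥U => (inner ℂ p.2 (f z p.1) : ℂ)) (kc U ℂ)

/-- The closed unit ball of `Hol(U, L(X,Y))`. -/
def opBall (U : Set ℂ) (X Y : Type*) [NormedAddCommGroup X] [InnerProductSpace ℂ X]
    [NormedAddCommGroup Y] [InnerProductSpace ℂ Y] : Set (↥U → (X →L[ℂ] Y)) :=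
  {f | HolFn U f ∧ ∀ z : ↥U, ‖f z‖ ≤ 1}

section Helpers

variable {X Y : Type*} [NormedAddCommGroup X] [InnerProductSpace ℂ X]
  [NormedAddCommGroup Y] [InnerProductSpace ℂ Y]

/-- A bounded sesquilinear form gives a continuous linear operator. -/
lemma sesq_to_clm [CompleteSpace Y] (b : X → Y → ℂ) (C : ℝ) (hC : 0 ≤ C)
    (hadd1 : ∀ φ φ' ψ, b (φ + φ') ψ = b φ ψ + b φ' ψ)
    (hsmul1 : ∀ (c : ℂ) φ ψ, b (c • φ) ψ = c * b φ ψ)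
    (hadd2 : ∀ φ ψ ψ', b φ (ψ + ψ') = b φ ψ + b φ ψ')
    (hsmul2 : ∀ (c : ℂ) φ ψ, b φ (c • ψ) = (starRingEnd ℂ) c * b φ ψ)
    (hb : ∀ φ ψ, ‖b φ ψ‖ ≤ C * ‖φ‖ * ‖ψ‖) :
    ∃ A : X →L[ℂ] Y, ‖A‖ ≤ C ∧ ∀ φ ψ, (inner ℂ ψ (A φ) : ℂ) = b φ ψ := by
  have key : ∀ φ : X, ∃ y : Y, ‖y‖ ≤ C * ‖φ‖ ∧ ∀ ψ, (inner ℂ ψ y : ℂ) = b φ ψ := by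
    intro φ
    let ℓ : Y →L[ℂ] ℂ := LinearMap.mkContinuous
      { toFun := fun ψ => (starRingEnd ℂ) (b φ ψ)
        map_add' := fun ψ ψ' => by simp only [hadd2]; exact map_add _ _ _
        map_smul' := fun c ψ => by simp [hsmul2, mul_comm] }
      (C * ‖φ‖) (fun ψ => by
        simpa [mul_assoc] using hb φ ψ)
    refine ⟨(InnerProductSpace.toDual ℂ Y).symm ℓ, ?_, ?_⟩
    · rw [LinearIsometryEquiv.norm_map]
      exact LinearMap.mkContinuous_norm_le _ (by positivity) _
    · intro ψ
      have h1 : (inner ℂ ((InnerProductSpace.toDual ℂ Y).symm ℓ) ψ : ℂ) = ℓ ψ :=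
        InnerProductSpace.toDual_symm_apply
      have h2 : (inner ℂ ψ ((InnerProductSpace.toDual ℂ Y).symm ℓ) : ℂ) =
          (starRingEnd ℂ) (ℓ ψ) := by
        rw [← h1, inner_conj_symm]
      rw [h2]
      show (starRingEnd ℂ) ((starRingEnd ℂ) (b φ ψ)) = b φ ψ
      simp
  choose y hy1 hy2 using key
  have hadd : ∀ φ φ', y (φ + φ') = y φ + y φ' := by
    intro φ φ'
    refine ext_inner_left ℂ fun ψ => ?_
    rw [hy2, hadd1, inner_add_right, hy2, hy2]
  have hsm : ∀ (c : ℂ) φ, y (c • φ) = c • y φ := by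
    intro c φ
    refine ext_inner_left ℂ fun ψ => ?_
    rw [hy2, hsmul1, inner_smul_right, hy2]
  refine ⟨LinearMap.mkContinuous
    { toFun := y, map_add' := hadd, map_smul' := hsm } C (fun φ => hy1 φ), ?_, ?_⟩
  · exact LinearMap.mkContinuous_norm_le _ hC _
  · intro φ ψ; exact hy2 φ ψ

/-- Cauchy estimate for the derivative. -/
lemma deriv_le_of_bound {U : Set ℂ} {h : ℂ → ℂ} (hd : DifferentiableOn ℂ h U)
    {M : ℝ} (hM : ∀ z ∈ U, ‖h z‖ ≤ M) {c : ℂ} {r : ℝ} (hr : 0 < r)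
    (hsub : closedBall c r ⊆ U) : ‖deriv h c‖ ≤ M / r := by
  apply Complex.norm_deriv_le_of_forall_mem_sphere_norm_le hr
  · exact ⟨hd.mono (ball_subset_closedBall.trans hsub),
      (hd.continuousOn.mono (closure_ball_subset_closedBall.trans hsub))⟩
  · exact fun z hz => hM z (hsub (sphere_subset_closedBall hz))

end Helpers

section Montel

/-- Evaluation at a point is continuous for the compact convergence topology. -/
lemma kc_eval_cont {U : Set ℂ} {E : Type*} [NormedAddCommGroup E] [NormedSpace ℂ E]
    (z : ↥U) : Continuous[kc U E, _] (fun h : ↥U → E => h z) :=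
  (UniformOnFun.uniformContinuous_eval_of_mem E {K : Set ↥U | IsCompact K}
    (mem_singleton z) (isCompact_singleton : IsCompact ({z} : Set ↥U))).continuous

/-- The closed "ball" of holomorphic functions bounded by `M`. -/
def HBall (U : Set ℂ) (M : ℝ) : Set (↥U → ℂ) := {h | HolFn U h ∧ ∀ z, ‖h z‖ ≤ M}

lemma hball_equicontinuous {U : Set ℂ} (hU : IsOpen U) (M : ℝ) :
    Equicontinuous (fun (i : HBall U M) => (i : ↥U → ℂ)) := by
  intro z₀
  rcases isEmpty_or_nonempty (HBall U M) with hEmp | hNe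
  · rw [Metric.equicontinuousAt_iff]
    exact fun ε hε => ⟨1, one_pos, fun x _ i => (hEmp.false i).elim⟩
  have hM : 0 ≤ M := by
    obtain ⟨i⟩ := hNe
    exact le_trans (norm_nonneg _) (i.2.2 z₀)
  obtain ⟨ε, hε, hball⟩ := Metric.isOpen_iff.mp hU (z₀ : ℂ) z₀.2
  set r : ℝ := ε / 3 with hr
  have hrpos : 0 < r := by positivity
  -- each member is (M/r)-Lipschitz on ball (z₀ : ℂ) r
  have hlip : ∀ i : HBall U M, ∀ z ∈ ball (z₀ : ℂ) r,
      ‖(i.2.1.choose) z - (i.2.1.choose) (z₀ : ℂ)‖ ≤ M / r * ‖z - (z₀ : ℂ)‖ := by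
    intro i z hz
    obtain ⟨hdiff, heq⟩ := i.2.1.choose_spec
    have hMb : ∀ w ∈ U, ‖i.2.1.choose w‖ ≤ M := by
      intro w hw
      have := i.2.2 ⟨w, hw⟩
      rwa [heq ⟨w, hw⟩] at this
    have hballU : ball (z₀ : ℂ) r ⊆ U := fun x hx =>
      hball (lt_of_lt_of_le hx (show r ≤ ε by rw [hr]; linarith))
    apply Convex.norm_image_sub_le_of_norm_deriv_le
      (fun x hx => hdiff.differentiableAt (hU.mem_nhds (hballU hx)))
      (fun x hx => ?_) (convex_ball _ _) (mem_ball_self hrpos) hz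
    -- deriv bound at x ∈ ball z₀ r
    have hcb : closedBall x r ⊆ U := by
      intro w hw
      apply hball
      calc dist w (z₀ : ℂ) ≤ dist w x + dist x (z₀ : ℂ) := dist_triangle _ _ _
        _ < r + r := add_lt_add_of_le_of_lt hw hx
        _ < ε := by rw [hr]; linarith
    exact (deriv_le_of_bound hdiff hMb hrpos hcb)
  rw [Metric.equicontinuousAt_iff]
  intro δ hδ
  refine ⟨min r (δ * r / (M + 1)), by positivity, fun x hx i => ?_⟩
  obtain ⟨hdiff, heq⟩ := i.2.1.choose_spec
  have hxball : (x : ℂ) ∈ ball (z₀ : ℂ) r := by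
    rw [mem_ball, ← Subtype.dist_eq]
    exact lt_of_lt_of_le hx (min_le_left _ _)
  have h1 : dist ((i : ↥U → ℂ) z₀) ((i : ↥U → ℂ) x) ≤ M / r * dist (x : ℂ) (z₀ : ℂ) := by
    rw [heq z₀, heq x, dist_comm, dist_eq_norm, dist_eq_norm]
    exact hlip i x hxball
  have h2 : dist (x : ℂ) (z₀ : ℂ) < δ * r / (M + 1) := by
    rw [← Subtype.dist_eq]
    exact lt_of_lt_of_le hx (min_le_right _ _)
  calc dist ((i : ↥U → ℂ) z₀) ((i : ↥U → ℂ) x)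
      ≤ M / r * dist (x : ℂ) (z₀ : ℂ) := h1
    _ ≤ M / r * (δ * r / (M + 1)) := by
        apply mul_le_mul_of_nonneg_left h2.le (by positivity)
    _ = δ * (M / (M + 1)) := by field_simp
    _ < δ * 1 := by
        apply mul_lt_mul_of_pos_left _ hδ
        rw [div_lt_one (by linarith)]; linarith
    _ = δ := mul_one δ

lemma hball_isClosed {U : Set ℂ} (hU : IsOpen U) (M : ℝ) :
    IsClosed[kc U ℂ] (HBall U M) := by
  letI t := kc U ℂ
  rw [isClosed_iff_clusterPt]
  intro g hg
  set l : Filter (↥U → ℂ) := 𝓝 g ⊓ 𝓟 (HBall U M) with hl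
  haveI hne : l.NeBot := hg
  have hls : HBall U M ∈ l := mem_inf_of_right (mem_principal_self _)
  have hgd : g ∈ closure (HBall U M) := by rwa [mem_closure_iff_clusterPt]
  -- the norm bound passes to the closure
  have hbd : ∀ z : ↥U, ‖g z‖ ≤ M := by
    intro z
    have hcl : IsClosed {h : ↥U → ℂ | ‖h z‖ ≤ M} :=
      IsClosed.preimage ((kc_eval_cont z).norm) isClosed_Iic
    have : g ∈ closure {h : ↥U → ℂ | ‖h z‖ ≤ M} :=
      closure_mono (fun h hh => hh.2 z) hgd
    rwa [hcl.closure_eq] at this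
  -- holomorphy passes to the closure
  classical
  set E : (↥U → ℂ) → (ℂ → ℂ) := fun h =>
    if hh : HolFn U h then hh.choose else 0 with hE
  have hE1 : ∀ h ∈ HBall U M, DifferentiableOn ℂ (E h) U := by
    intro h hh
    rw [hE]; simp only [dif_pos hh.1]
    exact hh.1.choose_spec.1
  have hE2 : ∀ h ∈ HBall U M, ∀ z : ↥U, h z = E h (z : ℂ) := by
    intro h hh z
    rw [hE]; simp only [dif_pos hh.1]
    exact hh.1.choose_spec.2 z
  set G : ℂ → ℂ := fun w => if hw : w ∈ U then g ⟨w, hw⟩ else 0 with hG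
  have htuo : ∀ K ⊆ U, IsCompact K → TendstoUniformlyOn E G l K := by
    intro K hKU hK
    have hK' : IsCompact ((Subtype.val ⁻¹' K : Set ↥U)) := by
      rw [Topology.IsEmbedding.subtypeVal.isCompact_iff, Subtype.image_preimage_coe,
        inter_eq_self_of_subset_right hKU]
      exact hK
    have htd : Tendsto (fun h : ↥U → ℂ =>
        UniformOnFun.ofFun {K : Set ↥U | IsCompact K} h) l
        (𝓝 (UniformOnFun.ofFun {K : Set ↥U | IsCompact K} g)) := inf_le_left
    have huo := (UniformOnFun.tendsto_iff_tendstoUniformlyOn).mp htd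
      (Subtype.val ⁻¹' K) hK'
    intro V hV
    filter_upwards [huo V hV, hls] with h hh hmem
    intro x hxK
    have hxU : x ∈ U := hKU hxK
    have := hh ⟨x, hxU⟩ hxK
    have e1 : G x = g ⟨x, hxU⟩ := by rw [hG]; simp only [dif_pos hxU]
    have e2 : E h x = h ⟨x, hxU⟩ := (hE2 h hmem ⟨x, hxU⟩).symm
    rw [e1, e2]
    exact this
  have htluo : TendstoLocallyUniformlyOn E G l U :=
    (tendstoLocallyUniformlyOn_iff_forall_isCompact hU).mpr htuo
  have hdiff : DifferentiableOn ℂ G U := by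
    apply htluo.differentiableOn ?_ hU
    filter_upwards [hls] with h hh
    exact hE1 h hh
  refine ⟨⟨G, hdiff, fun z => ?_⟩, hbd⟩
  rw [hG]; simp only [dif_pos z.2]

lemma montel {U : Set ℂ} (hU : IsOpen U) (M : ℝ) :
    @IsCompact _ (kc U ℂ) (HBall U M) := by
  letI t := kc U ℂ
  have hclosed := hball_isClosed hU M
  have hclemb : IsClosedEmbedding
      ((UniformOnFun.ofFun {K : Set ↥U | IsCompact K}) ∘ (fun h : ↥U → ℂ => h)) := by
    refine ⟨⟨⟨?_⟩, fun a b hab => hab⟩, ?_⟩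
    · exact (induced_id (t := t)).symm
    · have hsurj : Function.Surjective ((UniformOnFun.ofFun {K : Set ↥U | IsCompact K}) ∘
          (fun h : ↥U → ℂ => h)) := (UniformOnFun.ofFun _).surjective.comp fun h => ⟨h, rfl⟩
      rw [hsurj.range_eq]
      exact isClosed_univ
  have key := ArzelaAscoli.isCompact_closure_of_isClosedEmbedding
    (F := fun h : ↥U → ℂ => h) (𝔖 := {K : Set ↥U | IsCompact K})
    (fun K hK => hK) hclemb
    (s := HBall U M)
    (fun K _ => (hball_equicontinuous hU M).equicontinuousOn K)
    (fun K _ z _ => ⟨closedBall 0 M, isCompact_closedBall 0 M,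
      fun h hh => mem_closedBall_zero_iff.mpr (hh.2 z)⟩)
  rwa [hclosed.closure_eq] at key

end Montel

section WeakToStrong

variable {X Y : Type*} [NormedAddCommGroup X] [InnerProductSpace ℂ X]
  [NormedAddCommGroup Y] [InnerProductSpace ℂ Y]

lemma circleIntegral_add {E : Type*} [NormedAddCommGroup E] [NormedSpace ℂ E]
    {f g : ℂ → E} {c : ℂ} {R : ℝ}
    (hf : CircleIntegrable f c R) (hg : CircleIntegrable g c R) :
    (∮ z in C(c, R), (f z + g z)) = (∮ z in C(c, R), f z) + ∮ z in C(c, R), g z := by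
  simp only [circleIntegral, smul_add]
  exact intervalIntegral.integral_add hf.out hg.out

/-- A uniformly bounded, weakly holomorphic operator-valued function is holomorphic. -/
lemma weak_to_strong [CompleteSpace Y] {U : Set ℂ} (hU : IsOpen U)
    (f : ↥U → (X →L[ℂ] Y)) (hbd : ∀ z, ‖f z‖ ≤ 1)
    (hw : ∀ (φ : X) (ψ : Y), HolFn U fun z => (inner ℂ ψ (f z φ) : ℂ)) :
    HolFn U f := by
  classical
  choose h h1 h2 using hw
  set F : ℂ → X →L[ℂ] Y := fun w => if hw' : w ∈ U then f ⟨w, hw'⟩ else 0 with hF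
  refine ⟨F, ?_, fun z => by rw [hF]; simp only [dif_pos z.2]⟩
  intro z₀ hz₀
  obtain ⟨ε, hε, hball⟩ := Metric.isOpen_iff.mp hU z₀ hz₀
  set R : ℝ≥0 := ⟨ε / 2, by positivity⟩ with hRdef
  have hR : 0 < R := by
    rw [← NNReal.coe_lt_coe]
    show (0 : ℝ) < ε / 2
    positivity
  have hRR : (0 : ℝ) < (R : ℝ) := hR
  have hsub : closedBall z₀ (R : ℝ) ⊆ U := by
    intro x hx
    apply hball
    rw [mem_ball]
    calc dist x z₀ ≤ (R : ℝ) := hx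
      _ < ε := by show ε / 2 < ε; linarith
  have hsphere : ∀ ζ ∈ sphere z₀ (R : ℝ), ζ ∈ U :=
    fun ζ hζ => hsub (sphere_subset_closedBall hζ)
  -- the Cauchy coefficients
  set b : ℕ → X → Y → ℂ := fun n φ ψ =>
    (2 * (Real.pi : ℂ) * Complex.I)⁻¹ •
      ∮ ζ in C(z₀, (R : ℝ)), (ζ - z₀)⁻¹ ^ n • (ζ - z₀)⁻¹ • h φ ψ ζ with hbdef
  have hcoef : ∀ n φ ψ, cauchyPowerSeries (h φ ψ) z₀ (R : ℝ) n
      = ContinuousMultilinearMap.mkPiRing ℂ (Fin n) (b n φ ψ) := fun n φ ψ => rfl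
  have hcont : ∀ φ ψ, ContinuousOn (h φ ψ) U := fun φ ψ => (h1 φ ψ).continuousOn
  have hci : ∀ (n : ℕ) (φ : X) (ψ : Y),
      CircleIntegrable (fun ζ => (ζ - z₀)⁻¹ ^ n • (ζ - z₀)⁻¹ • h φ ψ ζ) z₀ (R : ℝ) := by
    intro n φ ψ
    apply ContinuousOn.circleIntegrable hRR.le
    have hinv : ContinuousOn (fun ζ : ℂ => (ζ - z₀)⁻¹) (sphere z₀ (R : ℝ)) := by
      apply ContinuousOn.inv₀ (by fun_prop)
      exact fun x hx => sub_ne_zero.2 (ne_of_mem_sphere hx hRR.ne')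
    exact ((hinv.pow n).smul (hinv.smul ((hcont φ ψ).mono hsphere)))
  have hval : ∀ (φ : X) (ψ : Y) (x : ℂ) (hx : x ∈ U),
      h φ ψ x = inner ℂ ψ (f ⟨x, hx⟩ φ) := fun φ ψ x hx => (h2 φ ψ ⟨x, hx⟩).symm
  -- sesquilinearity of the coefficients
  have hb_add1 : ∀ n φ φ' ψ, b n (φ + φ') ψ = b n φ ψ + b n φ' ψ := by
    intro n φ φ' ψ
    simp only [hbdef]
    rw [show (∮ ζ in C(z₀, (R : ℝ)), (ζ - z₀)⁻¹ ^ n • (ζ - z₀)⁻¹ • h (φ + φ') ψ ζ)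
        = ∮ ζ in C(z₀, (R : ℝ)), ((ζ - z₀)⁻¹ ^ n • (ζ - z₀)⁻¹ • h φ ψ ζ
          + (ζ - z₀)⁻¹ ^ n • (ζ - z₀)⁻¹ • h φ' ψ ζ) from
      circleIntegral.integral_congr hRR.le (fun ζ hζ => by
        have hζU := hsphere ζ hζ
        simp only [hval _ _ _ hζU, map_add, inner_add_right, smul_add]),
      circleIntegral_add (hci n φ ψ) (hci n φ' ψ), smul_add]
  have hb_smul1 : ∀ n (c : ℂ) φ ψ, b n (c • φ) ψ = c * b n φ ψ := by
    intro n c φ ψ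
    simp only [hbdef]
    rw [show (∮ ζ in C(z₀, (R : ℝ)), (ζ - z₀)⁻¹ ^ n • (ζ - z₀)⁻¹ • h (c • φ) ψ ζ)
        = ∮ ζ in C(z₀, (R : ℝ)), c • ((ζ - z₀)⁻¹ ^ n • (ζ - z₀)⁻¹ • h φ ψ ζ) from
      circleIntegral.integral_congr hRR.le (fun ζ hζ => by
        have hζU := hsphere ζ hζ
        simp only [hval _ _ _ hζU, map_smul, inner_smul_right, smul_eq_mul]; ring),
      circleIntegral.integral_smul, smul_comm, smul_eq_mul]
  have hb_add2 : ∀ n φ ψ ψ', b n φ (ψ + ψ') = b n φ ψ + b n φ ψ' := by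
    intro n φ ψ ψ'
    simp only [hbdef]
    rw [show (∮ ζ in C(z₀, (R : ℝ)), (ζ - z₀)⁻¹ ^ n • (ζ - z₀)⁻¹ • h φ (ψ + ψ') ζ)
        = ∮ ζ in C(z₀, (R : ℝ)), ((ζ - z₀)⁻¹ ^ n • (ζ - z₀)⁻¹ • h φ ψ ζ
          + (ζ - z₀)⁻¹ ^ n • (ζ - z₀)⁻¹ • h φ ψ' ζ) from
      circleIntegral.integral_congr hRR.le (fun ζ hζ => by
        have hζU := hsphere ζ hζ
        simp only [hval _ _ _ hζU, inner_add_left, smul_add]),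
      circleIntegral_add (hci n φ ψ) (hci n φ ψ'), smul_add]
  have hb_smul2 : ∀ n (c : ℂ) φ ψ, b n φ (c • ψ) = (starRingEnd ℂ) c * b n φ ψ := by
    intro n c φ ψ
    simp only [hbdef]
    rw [show (∮ ζ in C(z₀, (R : ℝ)), (ζ - z₀)⁻¹ ^ n • (ζ - z₀)⁻¹ • h φ (c • ψ) ζ)
        = ∮ ζ in C(z₀, (R : ℝ)), (starRingEnd ℂ) c •
            ((ζ - z₀)⁻¹ ^ n • (ζ - z₀)⁻¹ • h φ ψ ζ) from
      circleIntegral.integral_congr hRR.le (fun ζ hζ => by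
        have hζU := hsphere ζ hζ
        simp only [hval _ _ _ hζU, inner_smul_left, smul_eq_mul]; ring),
      circleIntegral.integral_smul, smul_comm, smul_eq_mul]
  -- bound on the coefficients
  have hb_bd : ∀ n φ ψ, ‖b n φ ψ‖ ≤ ((R : ℝ)⁻¹) ^ n * ‖φ‖ * ‖ψ‖ := by
    intro n φ ψ
    have hbound : ∀ ζ ∈ sphere z₀ (R : ℝ),
        ‖(ζ - z₀)⁻¹ ^ n • (ζ - z₀)⁻¹ • h φ ψ ζ‖
          ≤ (R : ℝ)⁻¹ ^ n * ((R : ℝ)⁻¹ * (‖φ‖ * ‖ψ‖)) := by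
      intro ζ hζ
      have hζU := hsphere ζ hζ
      have hnorm : ‖ζ - z₀‖ = (R : ℝ) := mem_sphere_iff_norm.mp hζ
      simp only [norm_smul, norm_pow, norm_inv, hnorm]
      have : ‖h φ ψ ζ‖ ≤ ‖φ‖ * ‖ψ‖ := by
        rw [hval _ _ _ hζU]
        calc ‖(inner ℂ ψ (f ⟨ζ, hζU⟩ φ) : ℂ)‖ ≤ ‖ψ‖ * ‖f ⟨ζ, hζU⟩ φ‖ := norm_inner_le_norm _ _
          _ ≤ ‖ψ‖ * (‖f ⟨ζ, hζU⟩‖ * ‖φ‖) :=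
            mul_le_mul_of_nonneg_left (le_opNorm _ _) (norm_nonneg _)
          _ ≤ ‖ψ‖ * (1 * ‖φ‖) := by
            apply mul_le_mul_of_nonneg_left _ (norm_nonneg _)
            exact mul_le_mul_of_nonneg_right (hbd _) (norm_nonneg _)
          _ = ‖φ‖ * ‖ψ‖ := by ring
      exact mul_le_mul_of_nonneg_left
        (mul_le_mul_of_nonneg_left this (by positivity)) (by positivity)
    have := circleIntegral.norm_two_pi_i_inv_smul_integral_le_of_norm_le_const
      hRR.le hbound
    refine le_trans this (le_of_eq ?_)
    field_simp
  -- the operator coefficients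
  have hA : ∀ n, ∃ A : X →L[ℂ] Y, ‖A‖ ≤ ((R : ℝ)⁻¹) ^ n ∧
      ∀ φ ψ, (inner ℂ ψ (A φ) : ℂ) = b n φ ψ := by
    intro n
    exact sesq_to_clm (b n) (((R : ℝ)⁻¹) ^ n) (by positivity)
      (hb_add1 n) (fun c => hb_smul1 n c) (hb_add2 n) (fun c => hb_smul2 n c)
      (fun φ ψ => hb_bd n φ ψ)
  choose A hA1 hA2 using hA
  set B : FormalMultilinearSeries ℂ ℂ (X →L[ℂ] Y) :=
    fun n => ContinuousMultilinearMap.mkPiRing ℂ (Fin n) (A n) with hBdef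
  have hBrad : (R : ℝ≥0∞) ≤ B.radius := by
    apply FormalMultilinearSeries.le_radius_of_bound _ 1
    intro n
    simp only [hBdef]
    rw [ContinuousMultilinearMap.norm_mkPiRing]
    calc ‖A n‖ * (R : ℝ) ^ n ≤ ((R : ℝ)⁻¹) ^ n * (R : ℝ) ^ n :=
        mul_le_mul_of_nonneg_right (hA1 n) (by positivity)
      _ = 1 := by rw [← mul_pow, inv_mul_cancel₀ hRR.ne', one_pow]
  have hBpos : 0 < B.radius := lt_of_lt_of_le (by exact_mod_cast hR) hBrad
  -- the candidate local expansion
  have hkey : ∀ w ∈ ball z₀ (R : ℝ), F w = B.sum (w - z₀) := by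
    intro w hw
    have hwU : w ∈ U := hsub (ball_subset_closedBall hw)
    have hwe : w - z₀ ∈ EMetric.ball (0 : ℂ) B.radius := by
      refine lt_of_lt_of_le ?_ hBrad
      rw [edist_eq_enorm_sub, sub_zero]
      rw [mem_ball, dist_eq_norm] at hw
      exact_mod_cast hw
    have hOp : HasSum (fun n => B n fun _ => w - z₀) (B.sum (w - z₀)) := B.hasSum hwe
    have e0 : F w = f ⟨w, hwU⟩ := by rw [hF]; simp only [dif_pos hwU]
    rw [e0]
    refine ContinuousLinearMap.ext fun φ => ?_
    refine ext_inner_left ℂ fun ψ => ?_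
    set L : (X →L[ℂ] Y) →L[ℂ] ℂ :=
      (innerSL ℂ ψ).comp (ContinuousLinearMap.apply ℂ Y φ) with hL
    have hLv : ∀ T : X →L[ℂ] Y, L T = inner ℂ ψ (T φ) := fun T => rfl
    have hscal : HasSum
        (fun n => (cauchyPowerSeries (h φ ψ) z₀ (R : ℝ) n) fun _ => w - z₀)
        (h φ ψ w) := by
      have hps := ((h1 φ ψ).mono hsub).hasFPowerSeriesOnBall hR
      exact hps.hasSum_sub (by rw [Metric.emetric_ball_nnreal]; exact hw)
    have hterm : ∀ n, ((cauchyPowerSeries (h φ ψ) z₀ (R : ℝ) n) fun _ => w - z₀)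
        = (w - z₀) ^ n • b n φ ψ := by
      intro n
      rw [hcoef n φ ψ, ContinuousMultilinearMap.mkPiRing_apply]
      congr 1
      simp [Finset.prod_const]
    have hOp2 := L.hasSum hOp
    have hterm2 : ∀ n, L (B n fun _ => w - z₀) = (w - z₀) ^ n • b n φ ψ := by
      intro n
      have e1 : B n (fun _ => w - z₀) = (w - z₀) ^ n • A n := by
        simp only [hBdef]
        rw [ContinuousMultilinearMap.mkPiRing_apply]
        congr 1
        simp [Finset.prod_const]
      rw [e1, map_smul, hLv, hA2 n φ ψ]
    simp only [hterm] at hscal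
    simp only [hterm2] at hOp2
    have huniq : h φ ψ w = L (B.sum (w - z₀)) := hscal.unique hOp2
    calc (inner ℂ ψ ((f ⟨w, hwU⟩) φ) : ℂ) = h φ ψ w := h2 φ ψ ⟨w, hwU⟩
      _ = L (B.sum (w - z₀)) := huniq
      _ = inner ℂ ψ ((B.sum (w - z₀)) φ) := hLv _
  -- conclude differentiability
  have hGdiff : DifferentiableAt ℂ (fun w => B.sum (w - z₀)) z₀ := by
    have h0 : DifferentiableOn ℂ B.sum (EMetric.ball 0 B.radius) :=
      (B.hasFPowerSeriesOnBall hBpos).differentiableOn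
    have h0' : DifferentiableAt ℂ B.sum ((fun w => w - z₀) z₀) := by
      show DifferentiableAt ℂ B.sum (z₀ - z₀)
      rw [sub_self]
      exact h0.differentiableAt (EMetric.isOpen_ball.mem_nhds (EMetric.mem_ball_self hBpos))
    exact DifferentiableAt.comp (𝕜 := ℂ) (g := B.sum) (f := fun w => w - z₀) z₀ h0' (differentiableAt_id.sub_const z₀)
  have hFd : DifferentiableAt ℂ F z₀ :=
    hGdiff.congr_of_eventuallyEq (eventuallyEq_of_mem (ball_mem_nhds z₀ hRR) hkey)
  exact hFd.differentiableWithinAt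

end WeakToStrong


section Assembly

variable {X Y : Type*} [NormedAddCommGroup X] [InnerProductSpace ℂ X]
  [NormedAddCommGroup Y] [InnerProductSpace ℂ Y]

/-- If the image of a set is compact, the set is compact in the induced topology. -/
lemma isCompact_induced {α β : Type*} {tβ : TopologicalSpace β} (Φ : α → β) {S : Set α}
    (h : IsCompact (Φ '' S)) : @IsCompact α (TopologicalSpace.induced Φ tβ) S := by
  letI := TopologicalSpace.induced Φ tβ
  rw [isCompact_iff_ultrafilter_le_nhds] at h ⊢
  intro F hF
  have hS : S ∈ F := le_principal_iff.mp hF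
  have hmap : Φ '' S ∈ F.map Φ := image_mem_map hS
  obtain ⟨y, hyS, hy⟩ := h (F.map Φ) (le_principal_iff.mpr hmap)
  obtain ⟨x, hxS, rfl⟩ := hyS
  refine ⟨x, hxS, ?_⟩
  rw [nhds_induced]
  calc (F : Filter α) ≤ Filter.comap Φ (Filter.map Φ F) := le_comap_map
    _ ≤ Filter.comap Φ (𝓝 (Φ x)) := comap_mono hy

lemma luwot_eq_induced (U : Set ℂ) :
    luwot U X Y = TopologicalSpace.induced
      (fun f : ↥U → (X →L[ℂ] Y) => fun p : X × Y => fun z : ↥U => (inner ℂ p.2 (f z p.1) : ℂ))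
      (@Pi.topologicalSpace (X × Y) (fun _ => ↥U → ℂ) (fun _ => kc U ℂ)) := by
  have hpi : (@Pi.topologicalSpace (X × Y) (fun _ => ↥U → ℂ) (fun _ => kc U ℂ))
      = ⨅ p : X × Y, TopologicalSpace.induced
          (fun g : (X × Y) → ↥U → ℂ => g p) (kc U ℂ) := rfl
  rw [hpi, induced_iInf]
  simp only [induced_compose]
  rfl

lemma phi_image (U : Set ℂ) (hU : IsOpen U) [CompleteSpace Y] :
    (fun f : ↥U → (X →L[ℂ] Y) => fun p : X × Y => fun z : ↥U =>
        (inner ℂ p.2 (f z p.1) : ℂ)) '' opBall U X Y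
      = ((univ : Set (X × Y)).pi fun p => HBall U (‖p.1‖ * ‖p.2‖))
        ∩ {g | ∀ (φ φ' : X) (ψ : Y) (z : ↥U), g (φ + φ', ψ) z = g (φ, ψ) z + g (φ', ψ) z}
        ∩ {g | ∀ (c : ℂ) (φ : X) (ψ : Y) (z : ↥U), g (c • φ, ψ) z = c * g (φ, ψ) z}
        ∩ {g | ∀ (φ : X) (ψ ψ' : Y) (z : ↥U), g (φ, ψ + ψ') z = g (φ, ψ) z + g (φ, ψ') z}
        ∩ {g | ∀ (c : ℂ) (φ : X) (ψ : Y) (z : ↥U),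
            g (φ, c • ψ) z = (starRingEnd ℂ) c * g (φ, ψ) z} := by
  ext g
  constructor
  · rintro ⟨f, ⟨hfH, hfb⟩, rfl⟩
    refine ⟨⟨⟨⟨?_, ?_⟩, ?_⟩, ?_⟩, ?_⟩
    · intro p _
      obtain ⟨G, hG, hGeq⟩ := hfH
      constructor
      · refine ⟨fun w => inner ℂ p.2 (G w p.1), ?_, fun z => by simp only [hGeq]⟩
        have hc : DifferentiableOn ℂ (fun w => (G w) p.1) U :=
          hG.clm_apply (differentiableOn_const p.1)
        have : Differentiable ℂ (fun v : Y => (inner ℂ p.2 v : ℂ)) :=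
          (innerSL ℂ p.2).differentiable
        exact this.comp_differentiableOn hc
      · intro z
        calc ‖(inner ℂ p.2 (f z p.1) : ℂ)‖ ≤ ‖p.2‖ * ‖f z p.1‖ := norm_inner_le_norm _ _
          _ ≤ ‖p.2‖ * (‖f z‖ * ‖p.1‖) :=
              mul_le_mul_of_nonneg_left (le_opNorm _ _) (norm_nonneg _)
          _ ≤ ‖p.2‖ * (1 * ‖p.1‖) := by
              apply mul_le_mul_of_nonneg_left _ (norm_nonneg _)
              exact mul_le_mul_of_nonneg_right (hfb z) (norm_nonneg _)
          _ = ‖p.1‖ * ‖p.2‖ := by ring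
    · intro φ φ' ψ z; simp [map_add, inner_add_right]
    · intro c φ ψ z; simp [map_smul, inner_smul_right]
    · intro φ ψ ψ' z; simp [inner_add_left]
    · intro c φ ψ z; simp [inner_smul_left, mul_comm]
  · rintro ⟨⟨⟨⟨hpi, hz1⟩, hz2⟩, hz3⟩, hz4⟩
    have hball : ∀ (z : ↥U) (φ : X) (ψ : Y), ‖g (φ, ψ) z‖ ≤ 1 * ‖φ‖ * ‖ψ‖ := by
      intro z φ ψ
      have := (hpi (φ, ψ) (mem_univ _)).2 z
      simpa [one_mul] using this
    have hAz : ∀ z : ↥U, ∃ T : X →L[ℂ] Y, ‖T‖ ≤ 1 ∧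
        ∀ φ ψ, (inner ℂ ψ (T φ) : ℂ) = g (φ, ψ) z := by
      intro z
      exact sesq_to_clm (fun φ ψ => g (φ, ψ) z) 1 zero_le_one
        (fun φ φ' ψ => hz1 φ φ' ψ z) (fun c φ ψ => hz2 c φ ψ z)
        (fun φ ψ ψ' => hz3 φ ψ ψ' z) (fun c φ ψ => hz4 c φ ψ z)
        (fun φ ψ => hball z φ ψ)
    choose f hf1 hf2 using hAz
    have hHol : HolFn U f := by
      apply weak_to_strong hU f hf1
      intro φ ψ
      have : (fun z : ↥U => (inner ℂ ψ (f z φ) : ℂ)) = g (φ, ψ) :=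
        funext fun z => hf2 z φ ψ
      rw [this]
      exact (hpi (φ, ψ) (mem_univ _)).1
    refine ⟨f, ⟨hHol, hf1⟩, ?_⟩
    funext p z
    show (inner ℂ p.2 (f z p.1) : ℂ) = g p z
    rw [hf2 z p.1 p.2]

lemma part1 {U : Set ℂ} (hU : IsOpen U) [CompleteSpace Y] :
    @IsCompact _ (luwot U X Y) (opBall U X Y) := by
  rw [luwot_eq_induced U]
  apply isCompact_induced
  rw [phi_image U hU]
  letI tkc : TopologicalSpace (↥U → ℂ) := kc U ℂ
  have hev : ∀ (p : X × Y) (z : ↥U),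
      Continuous fun g : (X × Y) → ↥U → ℂ => g p z :=
    fun p z => (kc_eval_cont z).comp (continuous_apply p)
  have hpi : IsCompact ((univ : Set (X × Y)).pi fun p => HBall U (‖p.1‖ * ‖p.2‖)) :=
    isCompact_univ_pi fun p => montel hU _
  have h1 : IsClosed {g : (X × Y) → ↥U → ℂ | ∀ (φ φ' : X) (ψ : Y) (z : ↥U),
      g (φ + φ', ψ) z = g (φ, ψ) z + g (φ', ψ) z} := by
    have he : {g : (X × Y) → ↥U → ℂ | ∀ (φ φ' : X) (ψ : Y) (z : ↥U),
        g (φ + φ', ψ) z = g (φ, ψ) z + g (φ', ψ) z}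
        = ⋂ (φ : X) (φ' : X) (ψ : Y) (z : ↥U),
          {g : (X × Y) → ↥U → ℂ | g (φ + φ', ψ) z = g (φ, ψ) z + g (φ', ψ) z} := by
      ext g; simp [mem_iInter]
    rw [he]
    exact isClosed_iInter fun φ => isClosed_iInter fun φ' => isClosed_iInter fun ψ =>
      isClosed_iInter fun z => isClosed_eq (hev _ _) ((hev _ _).add (hev _ _))
  have h2 : IsClosed {g : (X × Y) → ↥U → ℂ | ∀ (c : ℂ) (φ : X) (ψ : Y) (z : ↥U),
      g (c • φ, ψ) z = c * g (φ, ψ) z} := by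
    have he : {g : (X × Y) → ↥U → ℂ | ∀ (c : ℂ) (φ : X) (ψ : Y) (z : ↥U),
        g (c • φ, ψ) z = c * g (φ, ψ) z}
        = ⋂ (c : ℂ) (φ : X) (ψ : Y) (z : ↥U),
          {g : (X × Y) → ↥U → ℂ | g (c • φ, ψ) z = c * g (φ, ψ) z} := by
      ext g; simp [mem_iInter]
    rw [he]
    exact isClosed_iInter fun c => isClosed_iInter fun φ => isClosed_iInter fun ψ =>
      isClosed_iInter fun z => isClosed_eq (hev _ _) (continuous_const.mul (hev _ _))
  have h3 : IsClosed {g : (X × Y) → ↥U → ℂ | ∀ (φ : X) (ψ ψ' : Y) (z : ↥U),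
      g (φ, ψ + ψ') z = g (φ, ψ) z + g (φ, ψ') z} := by
    have he : {g : (X × Y) → ↥U → ℂ | ∀ (φ : X) (ψ ψ' : Y) (z : ↥U),
        g (φ, ψ + ψ') z = g (φ, ψ) z + g (φ, ψ') z}
        = ⋂ (φ : X) (ψ : Y) (ψ' : Y) (z : ↥U),
          {g : (X × Y) → ↥U → ℂ | g (φ, ψ + ψ') z = g (φ, ψ) z + g (φ, ψ') z} := by
      ext g; simp [mem_iInter]
    rw [he]
    exact isClosed_iInter fun φ => isClosed_iInter fun ψ => isClosed_iInter fun ψ' =>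
      isClosed_iInter fun z => isClosed_eq (hev _ _) ((hev _ _).add (hev _ _))
  have h4 : IsClosed {g : (X × Y) → ↥U → ℂ | ∀ (c : ℂ) (φ : X) (ψ : Y) (z : ↥U),
      g (φ, c • ψ) z = (starRingEnd ℂ) c * g (φ, ψ) z} := by
    have he : {g : (X × Y) → ↥U → ℂ | ∀ (c : ℂ) (φ : X) (ψ : Y) (z : ↥U),
        g (φ, c • ψ) z = (starRingEnd ℂ) c * g (φ, ψ) z}
        = ⋂ (c : ℂ) (φ : X) (ψ : Y) (z : ↥U),
          {g : (X × Y) → ↥U → ℂ | g (φ, c • ψ) z = (starRingEnd ℂ) c * g (φ, ψ) z} := by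
      ext g; simp [mem_iInter]
    rw [he]
    exact isClosed_iInter fun c => isClosed_iInter fun φ => isClosed_iInter fun ψ =>
      isClosed_iInter fun z => isClosed_eq (hev _ _) (continuous_const.mul (hev _ _))
  exact (((hpi.inter_right h1).inter_right h2).inter_right h3).inter_right h4

lemma part2 {U : Set ℂ} (hU : IsOpen U) [CompleteSpace Y]
    (hX : TopologicalSpace.SeparableSpace X) (hY : TopologicalSpace.SeparableSpace Y) :
    @TopologicalSpace.MetrizableSpace (↥(opBall U X Y))
      (TopologicalSpace.induced Subtype.val (luwot U X Y)) := by
  letI tOp : TopologicalSpace (↥U → (X →L[ℂ] Y)) := luwot U X Y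
  letI tSub : TopologicalSpace (↥(opBall U X Y)) := TopologicalSpace.induced Subtype.val tOp
  haveI hcs : CompactSpace (↥(opBall U X Y)) := isCompact_iff_compactSpace.mp (part1 hU)
  obtain ⟨DX, hDXc, hDXd⟩ := TopologicalSpace.exists_countable_dense X
  obtain ⟨DY, hDYc, hDYd⟩ := TopologicalSpace.exists_countable_dense Y
  obtain ⟨DU, hDUc, hDUd⟩ := TopologicalSpace.exists_countable_dense ↥U
  haveI := hDXc.to_subtype
  haveI := hDYc.to_subtype
  haveI := hDUc.to_subtype
  set Ψ : ↥(opBall U X Y) → (↥DX × ↥DY × ↥DU → ℂ) :=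
    fun f q => inner ℂ ((q.2.1 : Y)) ((f : ↥U → X →L[ℂ] Y) q.2.2 ((q.1 : X))) with hΨ
  have hcont : Continuous Ψ := by
    apply continuous_pi
    intro q
    have h1 : Continuous[tOp, kc U ℂ] (fun f : ↥U → X →L[ℂ] Y =>
        fun z : ↥U => (inner ℂ ((q.2.1 : Y)) (f z ((q.1 : X))) : ℂ)) :=
      continuous_iInf_dom (i := (((q.1 : X)), ((q.2.1 : Y)))) continuous_induced_dom
    exact (@Continuous.comp _ _ _ tOp (kc U ℂ) _ _ _
      (kc_eval_cont (↑q.2.2 : ↥U)) h1).comp continuous_subtype_val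
  -- continuity of weak coordinates of a holomorphic function
  have hc : ∀ (h : ↥U → X →L[ℂ] Y), HolFn U h → ∀ (φ : X) (ψ : Y),
      Continuous fun z : ↥U => (inner ℂ ψ (h z φ) : ℂ) := by
    rintro h ⟨G, hG, hGeq⟩ φ ψ
    have h0 : Continuous fun z : ↥U => G (z : ℂ) := hG.continuousOn.restrict
    have h1 : Continuous fun z : ↥U => (G (z : ℂ)) φ :=
      ((ContinuousLinearMap.apply ℂ Y φ).continuous).comp h0
    have h2 : Continuous fun z : ↥U => (inner ℂ ψ ((G (z : ℂ)) φ) : ℂ) :=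
      Continuous.inner continuous_const h1
    exact h2.congr fun z => by rw [hGeq z]
  have hinj : Function.Injective Ψ := by
    intro f g hfg
    have hstep1 : ∀ φ ∈ DX, ∀ ψ ∈ DY, ∀ z : ↥U,
        (inner ℂ ψ ((f : ↥U → X →L[ℂ] Y) z φ) : ℂ) = inner ℂ ψ ((g : ↥U → X →L[ℂ] Y) z φ) := by
      intro φ hφ ψ hψ
      have heq : (fun z : ↥U => (inner ℂ ψ ((f : ↥U → X →L[ℂ] Y) z φ) : ℂ))
          = fun z : ↥U => (inner ℂ ψ ((g : ↥U → X →L[ℂ] Y) z φ) : ℂ) := by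
        apply Continuous.ext_on hDUd (hc _ f.2.1 φ ψ) (hc _ g.2.1 φ ψ)
        intro z hz
        exact congrFun hfg ⟨⟨φ, hφ⟩, ⟨ψ, hψ⟩, ⟨z, hz⟩⟩
      exact fun z => congrFun heq z
    have hstep2 : ∀ (z : ↥U), ∀ φ ∈ DX,
        (f : ↥U → X →L[ℂ] Y) z φ = (g : ↥U → X →L[ℂ] Y) z φ := by
      intro z φ hφ
      refine ext_inner_left ℂ fun ψ => ?_
      have heq : (fun ψ : Y => (inner ℂ ψ ((f : ↥U → X →L[ℂ] Y) z φ) : ℂ))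
          = fun ψ : Y => (inner ℂ ψ ((g : ↥U → X →L[ℂ] Y) z φ) : ℂ) := by
        apply Continuous.ext_on hDYd
          (Continuous.inner continuous_id continuous_const)
          (Continuous.inner continuous_id continuous_const)
        intro ψ hψ
        exact hstep1 φ hφ ψ hψ z
      exact congrFun heq ψ
    apply Subtype.ext
    funext z
    apply ContinuousLinearMap.coeFn_injective
    apply Continuous.ext_on hDXd ((f : ↥U → X →L[ℂ] Y) z).continuous
      ((g : ↥U → X →L[ℂ] Y) z).continuous
    intro φ hφ
    exact hstep2 z φ hφ
  have hemb := hcont.isClosedEmbedding hinj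
  exact hemb.toIsEmbedding.metrizableSpace

end Assembly


/-- **Banach–Alaoglu for holomorphic operator-valued functions.** The set
`R = {f ∈ Hol(U,L(X,Y)) : ‖f(z)‖ ≤ 1 ∀z}` is `𝒯_Λ`-compact; if `X` and `Y` are
separable then `(R,𝒯_Λ)` is metrisable. -/
theorem statement_5 (U : Set ℂ) (hU : IsOpen U)
    {X Y : Type*} [NormedAddCommGroup X] [InnerProductSpace ℂ X] [CompleteSpace X]
    [NormedAddCommGroup Y] [InnerProductSpace ℂ Y] [CompleteSpace Y] :
    @IsCompact _ (luwot U X Y) (opBall U X Y) ∧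
    (TopologicalSpace.SeparableSpace X → TopologicalSpace.SeparableSpace Y →
      @TopologicalSpace.MetrizableSpace (↥(opBall U X Y))
        (TopologicalSpace.induced Subtype.val (luwot U X Y))) :=
  ⟨part1 hU, fun hX hY => part2 hU hX hY⟩

end Paper
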